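/- arXiv:2501.03924 — 2 statements merged into one kernel-verified Lean document; each statement's English description precedes it below -/
import Mathlib

section
/- Let G be the free group of rank N ≥ 2 and q := 2N − 1. Then lim_{n→∞} M_{1_Ω,1_Ω}(B_n)/n³ = (q−1)²/(3q(q+1)); i.e., M_{1_Ω,1_Ω}(B_n) is asymptotically equivalent to n³/K with K := 3q(q+1)/(q−1)². -/
open MeasureTheory Filter
open scoped ENNReal

noncomputable section

namespace FreeGroupBoundary

/-- The alphabet `A`: the `N` generators and their inverses. -/
abbrev Letter (N : ℕ) := Fin N × Bool

/-- The inverse of a letter. -/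
def invLetter {N : ℕ} (a : Letter N) : Letter N := (a.1, !a.2)

/-- An infinite word is reduced if no letter is followed by its inverse. -/
def IsReduced {N : ℕ} (ω : ℕ → Letter N) : Prop := ∀ i, ω (i + 1) ≠ invLetter (ω i)

/-- The boundary `Ω` of the free group: infinite reduced words,
topologized as a subspace of the product space `A^ℕ`. -/
def Boundary (N : ℕ) : Type := {ω : ℕ → Letter N // IsReduced ω}

instance {N : ℕ} : TopologicalSpace (Boundary N) := instTopologicalSpaceSubtype

/-- `Ω` carries the Borel σ-algebra. -/
instance {N : ℕ} : MeasurableSpace (Boundary N) := borel _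

/-- The word length `|g|` with respect to the standard generators. -/
def wordLength {N : ℕ} (g : FreeGroup (Fin N)) : ℕ := (FreeGroup.toWord g).length

/-- `prefixProd ω t = ω(0)ω(1)⋯ω(t-1) ∈ G`. -/
def prefixProd {N : ℕ} (ω : ℕ → Letter N) (t : ℕ) : FreeGroup (Fin N) :=
  FreeGroup.mk (List.ofFn fun i : Fin t => ω i)

/-- The shadow `Ω_x = {ω ∈ Ω | ω_{|x|} = x}`. -/
def shadow {N : ℕ} (x : FreeGroup (Fin N)) : Set (Boundary N) :=
  {ω | prefixProd ω.1 (wordLength x) = x}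

/-- The Busemann function `β_ω(e,g) = lim_t (|ω_t| - |g⁻¹ω_t|)`
(the sequence is eventually constant, so `limUnder` picks its limit). -/
def busemann {N : ℕ} (ω : ℕ → Letter N) (g : FreeGroup (Fin N)) : ℤ :=
  limUnder atTop fun t : ℕ =>
    (wordLength (prefixProd ω t) : ℤ) - (wordLength (g⁻¹ * prefixProd ω t) : ℤ)

/-- The action of `g` on infinite words: reduce the concatenation of the reduced
word of `g` with `ω`.  `c` is the number of cancellations at the junction. -/
def actSeq {N : ℕ} (g : FreeGroup (Fin N)) (ω : ℕ → Letter N) : ℕ → Letter N :=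
  let w := FreeGroup.toWord g
  let m := w.length
  let c := Nat.findGreatest
    (fun c => ∀ i < c, w.reverse[i]? = some (invLetter (ω i))) m
  fun i =>
    if h : i < m - c then w.get ⟨i, lt_of_lt_of_le h (Nat.sub_le m c)⟩
    else ω (i - (m - c) + c)

open scoped Classical in
/-- The action of `G` on its boundary `Ω` (the `else` branch never occurs:
the reduced concatenation of a reduced word and an infinite reduced word is reduced). -/
def act {N : ℕ} (g : FreeGroup (Fin N)) (ω : Boundary N) : Boundary N :=
  if h : IsReduced (actSeq g ω.1) then ⟨actSeq g ω.1, h⟩ else ω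

/-- The ball `B_n = {g ∈ G : |g| ≤ n}`. -/
def ball (N n : ℕ) : Set (FreeGroup (Fin N)) := {g | wordLength g ≤ n}

/-- The sphere `S_k = {g ∈ G : |g| = k}`. -/
def sphere (N k : ℕ) : Set (FreeGroup (Fin N)) := {g | wordLength g = k}

/-- The constant function `1_Ω` as an element of `ℋ = L²(Ω,ν)`. -/
def oneL {N : ℕ} (ν : Measure (Boundary N)) [IsFiniteMeasure ν] : Lp ℂ 2 ν :=
  (memLp_const (1 : ℂ)).toLp fun _ => (1 : ℂ)

/-- `M_{ψ₁,ψ₂}(L) = Σ_{g ∈ L} |⟨π(g)ψ₁, ψ₂⟩|²` (a finite sum, since the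
sets `L` used below are finite). -/
def Mcoef {N : ℕ} {ν : Measure (Boundary N)}
    (π : FreeGroup (Fin N) →* (Lp ℂ 2 ν →L[ℂ] Lp ℂ 2 ν))
    (ψ₁ ψ₂ : Lp ℂ 2 ν) (L : Set (FreeGroup (Fin N))) : ℝ :=
  ∑ᶠ g ∈ L, ‖(inner ℂ (π g ψ₁) ψ₂ : ℂ)‖ ^ 2

/-! ### Auxiliary development -/

section Aux

variable {N : ℕ}

@[simp] lemma invLetter_invLetter (a : Letter N) : invLetter (invLetter a) = a := by
  simp [invLetter]

lemma invLetter_eq_comm {a b : Letter N} : a = invLetter b ↔ b = invLetter a := by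
  constructor <;> (rintro rfl; simp)

/-- A finite word is reduced. -/
def RedW (L : List (Letter N)) : Prop := List.IsChain (fun a b => b ≠ invLetter a) L

lemma redW_nil : RedW ([] : List (Letter N)) := List.isChain_nil

lemma RedW.take {L : List (Letter N)} (h : RedW L) (i : ℕ) : RedW (L.take i) :=
  List.IsChain.take h i

lemma RedW.drop {L : List (Letter N)} (h : RedW L) (i : ℕ) : RedW (L.drop i) :=
  List.IsChain.drop h i

lemma reduce_eq_self {L : List (Letter N)} (h : RedW L) : FreeGroup.reduce L = L := by
  induction L with
  | nil => rfl
  | cons a L ih =>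
    have hL : RedW L := h.tail
    rw [FreeGroup.reduce.cons, ih hL]
    cases L with
    | nil => rfl
    | cons b t =>
      have hab : b ≠ invLetter a := (List.isChain_cons_cons.mp h).1
      simp only [List.casesOn]
      rw [if_neg]
      rintro ⟨h1, h2⟩
      exact hab (Prod.ext h1.symm (by simp [invLetter, h2]))

lemma redW_toWord (g : FreeGroup (Fin N)) : RedW g.toWord := by
  rw [RedW, List.isChain_iff_getElem]
  intro i hlt
  intro hcontra
  set L := g.toWord with hL
  have hsplit : L = L.take i ++ (L.get ⟨i, by omega⟩) :: (L.get ⟨i+1, by omega⟩) :: L.drop (i+2) := by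
    conv_lhs => rw [← List.take_append_drop i L]
    congr 1
    rw [List.drop_eq_getElem_cons (by omega)]
    congr 1
    rw [List.drop_eq_getElem_cons (by omega)]
    rfl
  set x := L.get ⟨i, by omega⟩ with hx
  have : FreeGroup.reduce L = L.take i ++ (x.1, x.2) :: (x.1, !x.2) :: L.drop (i+2) := by
    rw [FreeGroup.reduce_toWord]
    convert hsplit using 3
    have hc' : L.get ⟨i+1, by omega⟩ = invLetter x := hcontra
    rw [hc']
    simp [invLetter]
  exact FreeGroup.reduce.not this

lemma toWord_mk_red {L : List (Letter N)} (h : RedW L) : (FreeGroup.mk L).toWord = L := by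
  rw [FreeGroup.toWord_mk, reduce_eq_self h]

lemma wordLength_mk_red {L : List (Letter N)} (h : RedW L) :
    wordLength (FreeGroup.mk L) = L.length := by
  rw [wordLength, toWord_mk_red h]

lemma mk_red_injective {L L' : List (Letter N)} (h : RedW L) (h' : RedW L')
    (e : FreeGroup.mk L = FreeGroup.mk L') : L = L' := by
  rw [← toWord_mk_red h, ← toWord_mk_red h', e]

lemma mk_red_ne_one {L : List (Letter N)} (h : RedW L) (hL : L ≠ []) :
    FreeGroup.mk L ≠ 1 := by
  intro e
  exact hL (by simpa [e, FreeGroup.toWord_one] using (toWord_mk_red h).symm)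

lemma redW_ofFn {ω : ℕ → Letter N} (hω : IsReduced ω) (j t : ℕ) :
    RedW (List.ofFn fun i : Fin t => ω (j + i)) := by
  rw [RedW, List.isChain_iff_getElem]
  intro i hlt
  simp only [List.getElem_ofFn]
  exact hω (j + i)

lemma redW_ofFn₀ {ω : ℕ → Letter N} (hω : IsReduced ω) (t : ℕ) :
    RedW (List.ofFn fun i : Fin t => ω i) := by
  have := redW_ofFn hω 0 t
  simpa using this

lemma redW_invRev {L : List (Letter N)} (h : RedW L) : RedW (FreeGroup.invRev L) := by
  rw [RedW, FreeGroup.invRev, List.isChain_reverse, List.isChain_map]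
  rw [RedW] at h
  refine h.imp ?_
  intro a b hab
  intro e
  apply hab
  simp only [invLetter, Prod.mk.injEq, Bool.not_not] at e
  exact Prod.ext e.1.symm (by simp [invLetter, ← e.2])

lemma toWord_prefixProd {ω : ℕ → Letter N} (hω : IsReduced ω) (t : ℕ) :
    (prefixProd ω t).toWord = List.ofFn fun i : Fin t => ω i :=
  toWord_mk_red (redW_ofFn₀ hω t)

lemma wordLength_prefixProd {ω : ℕ → Letter N} (hω : IsReduced ω) (t : ℕ) :
    wordLength (prefixProd ω t) = t := by
  rw [wordLength, toWord_prefixProd hω]; simp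

lemma ofFn_split (ω : ℕ → Letter N) {j t : ℕ} (h : j ≤ t) :
    (List.ofFn fun i : Fin t => ω i) =
      (List.ofFn fun i : Fin j => ω i) ++ (List.ofFn fun i : Fin (t - j) => ω (j + i)) := by
  obtain ⟨d, rfl⟩ := Nat.exists_eq_add_of_le h
  rw [List.ofFn_add]
  congr 1
  refine List.ext_getElem (by simp) ?_
  intro n h1 h2
  simp [Fin.natAdd]

lemma mk_inv_mul (w L' : List (Letter N)) (j : ℕ) :
    (FreeGroup.mk w)⁻¹ * FreeGroup.mk (w.take j ++ L') =
      FreeGroup.mk (FreeGroup.invRev (w.drop j) ++ L') := by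
  have h1 : FreeGroup.mk w = FreeGroup.mk (w.take j) * FreeGroup.mk (w.drop j) := by
    rw [FreeGroup.mul_mk, List.take_append_drop]
  rw [← FreeGroup.mul_mk, ← FreeGroup.mul_mk, h1, ← FreeGroup.inv_mk]
  group

/-- The matching (common-prefix) data between a reduced word `w` and an infinite word `ω`. -/
def QQ (w : List (Letter N)) (ω : ℕ → Letter N) (i : ℕ) : Prop :=
  i ≤ w.length ∧ ∀ t, t < i → w[t]? = some (ω t)

instance (w : List (Letter N)) (ω : ℕ → Letter N) : DecidablePred (QQ w ω) := fun i => by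
  unfold QQ; infer_instance

/-- Length of the common prefix of `w` and `ω`. -/
def matchLen (w : List (Letter N)) (ω : ℕ → Letter N) : ℕ :=
  Nat.findGreatest (QQ w ω) w.length

lemma QQ_zero (w : List (Letter N)) (ω : ℕ → Letter N) : QQ w ω 0 :=
  ⟨Nat.zero_le _, fun t ht => absurd ht (Nat.not_lt_zero t)⟩

lemma QQ_anti {w : List (Letter N)} {ω : ℕ → Letter N} {i i' : ℕ} (h : QQ w ω i)
    (hi : i' ≤ i) : QQ w ω i' :=
  ⟨le_trans hi h.1, fun t ht => h.2 t (lt_of_lt_of_le ht hi)⟩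

lemma matchLen_le (w : List (Letter N)) (ω : ℕ → Letter N) : matchLen w ω ≤ w.length :=
  Nat.findGreatest_le _

lemma QQ_matchLen (w : List (Letter N)) (ω : ℕ → Letter N) : QQ w ω (matchLen w ω) :=
  Nat.findGreatest_spec (Nat.zero_le _) (QQ_zero w ω)

lemma QQ_iff_le_matchLen {w : List (Letter N)} {ω : ℕ → Letter N} {i : ℕ} :
    QQ w ω i ↔ i ≤ matchLen w ω := by
  constructor
  · intro h; exact Nat.le_findGreatest h.1 h
  · intro h; exact QQ_anti (QQ_matchLen w ω) h

lemma ofFn_eq_take_iff {w : List (Letter N)} {ω : ℕ → Letter N} {i : ℕ} :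
    (List.ofFn fun s : Fin i => ω s) = w.take i ↔ QQ w ω i := by
  constructor
  · intro e
    have hlen : i ≤ w.length := by
      have := congrArg List.length e
      simp at this
      omega
    refine ⟨hlen, fun t ht => ?_⟩
    have h2 : t < w.length := lt_of_lt_of_le ht hlen
    have := congrArg (fun L => L[t]?) e
    simp only [List.getElem?_ofFn] at this
    rw [List.getElem?_take] at this
    simp [ht, h2, List.getElem?_eq_getElem] at this
    rw [List.getElem?_eq_getElem h2, ← this]
  · rintro ⟨hlen, hget⟩
    refine List.ext_getElem (by simp [hlen]) ?_
    intro n h1 h2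
    simp only [List.getElem_ofFn, List.getElem_take]
    have hn : n < i := by simpa using h1
    have := hget n hn
    rw [List.getElem?_eq_getElem (by omega)] at this
    exact (Option.some_injective _ this).symm

/-- The key word-length computation. -/
lemma wordLength_inv_mul (g : FreeGroup (Fin N)) {ω : ℕ → Letter N} (hω : IsReduced ω)
    {t : ℕ} (ht : g.toWord.length ≤ t) :
    wordLength (g⁻¹ * prefixProd ω t) =
      g.toWord.length + t - 2 * matchLen g.toWord ω := by
  set w := g.toWord with hw
  set k := w.length with hk
  set j := matchLen w ω with hj
  have hjk : j ≤ k := matchLen_le w ω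
  have hQ : QQ w ω j := QQ_matchLen w ω
  have hjt : j ≤ t := le_trans hjk ht
  set L' : List (Letter N) := List.ofFn (fun i : Fin (t - j) => ω (j + i)) with hL'
  have hofn : (List.ofFn fun i : Fin t => ω i) = w.take j ++ L' := by
    rw [ofFn_split ω hjt]
    congr 1
    exact ofFn_eq_take_iff.mpr hQ
  have key : g⁻¹ * prefixProd ω t = FreeGroup.mk (FreeGroup.invRev (w.drop j) ++ L') := by
    conv_lhs => rw [prefixProd, hofn, ← FreeGroup.mk_toWord (x := g), ← hw]
    exact mk_inv_mul w L' j
  have hred : RedW (FreeGroup.invRev (w.drop j) ++ L') := by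
    refine List.isChain_append.mpr ⟨redW_invRev ((redW_toWord g).drop j),
      redW_ofFn hω j (t - j), ?_⟩
    intro a ha b hb
    have hgl : (FreeGroup.invRev (w.drop j)).getLast? = (w.drop j).head?.map invLetter := by
      rw [show FreeGroup.invRev (w.drop j) = ((w.drop j).map invLetter).reverse from rfl,
        List.getLast?_reverse, List.head?_map]
    rw [hgl] at ha
    obtain ⟨a0, ha0, rfl⟩ := Option.map_eq_some_iff.mp (Option.mem_def.mp ha)
    rw [List.head?_drop] at ha0
    have hjlt : j < k := by
      by_contra hcon
      rw [List.getElem?_eq_none (by omega)] at ha0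
      simp at ha0
    have ha0' : a0 = w[j] := by
      rw [List.getElem?_eq_getElem hjlt] at ha0
      exact (Option.some_inj.mp ha0).symm
    have hb' : b = ω j := by
      have h0 : (0 : ℕ) < t - j := by omega
      rw [hL'] at hb
      rw [List.head?_eq_getElem?, List.getElem?_ofFn] at hb
      simp [List.ofFnNthVal, h0] at hb
      exact hb.symm
    intro e
    rw [hb', ha0'] at e
    rw [invLetter_invLetter] at e
    have hQ1 : QQ w ω (j + 1) := by
      refine ⟨by omega, fun s hs => ?_⟩
      rcases Nat.lt_succ_iff_lt_or_eq.mp hs with h | h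
      · exact hQ.2 s h
      · subst h
        rw [List.getElem?_eq_getElem hjlt, e]
    have := QQ_iff_le_matchLen.mp hQ1
    omega
  rw [key, wordLength_mk_red hred]
  have h1 : (FreeGroup.invRev (w.drop j)).length = k - j := by
    rw [FreeGroup.invRev_length, List.length_drop]
  have h2 : L'.length = t - j := by rw [hL', List.length_ofFn]
  rw [List.length_append, h1, h2]
  omega

lemma busemann_eq (g : FreeGroup (Fin N)) {ω : ℕ → Letter N} (hω : IsReduced ω) :
    busemann ω g = 2 * (matchLen g.toWord ω : ℤ) - (g.toWord.length : ℤ) := by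
  have hev : (fun t : ℕ => (wordLength (prefixProd ω t) : ℤ) -
      (wordLength (g⁻¹ * prefixProd ω t) : ℤ)) =ᶠ[atTop]
      (fun _ => 2 * (matchLen g.toWord ω : ℤ) - (g.toWord.length : ℤ)) := by
    filter_upwards [eventually_ge_atTop g.toWord.length] with t ht
    rw [wordLength_prefixProd hω, wordLength_inv_mul g hω ht]
    have h1 : matchLen g.toWord ω ≤ g.toWord.length := matchLen_le _ _
    rw [Nat.cast_sub (by omega : 2 * matchLen g.toWord ω ≤ g.toWord.length + t)]
    push_cast
    ring
  exact Filter.Tendsto.limUnder_eq (Filter.Tendsto.congr' hev.symm tendsto_const_nhds)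

/-! ### Shadows and cylinders -/

instance : DiscreteTopology (Letter N) := inferInstance

instance {N : ℕ} : BorelSpace (Boundary N) := ⟨rfl⟩

/-- The cylinder of all boundary points starting with the finite word `M`. -/
def pre (M : List (Letter N)) : Set (Boundary N) :=
  {ω | ∀ t (h : t < M.length), ω.1 t = M.get ⟨t, h⟩}

lemma mem_pre_iff_ofFn {M : List (Letter N)} {ω : Boundary N} :
    ω ∈ pre M ↔ (List.ofFn fun s : Fin M.length => ω.1 s) = M := by
  constructor
  · intro h
    refine List.ext_getElem (by simp) ?_
    intro n h1 h2
    simp only [List.getElem_ofFn]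
    exact h n h2
  · intro e t h
    have := congrArg (fun L => L[t]?) e
    simp only [List.getElem?_ofFn] at this
    simp [List.ofFnNthVal, h] at this
    rw [List.get_eq_getElem, ← this]

lemma continuous_eval (t : ℕ) : Continuous fun ω : Boundary N => ω.1 t :=
  (continuous_apply t).comp continuous_subtype_val

lemma measurableSet_pre (M : List (Letter N)) : MeasurableSet (pre M) := by
  have hrw : pre M = ⋂ (t : Fin M.length), {ω : Boundary N | ω.1 t = M.get t} := by
    ext ω
    constructor
    · intro h
      refine Set.mem_iInter.mpr fun t => ?_
      exact h t t.2
    · intro h t ht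
      exact Set.mem_iInter.mp h ⟨t, ht⟩
  rw [hrw]
  refine MeasurableSet.iInter fun t => ?_
  have : IsOpen {ω : Boundary N | ω.1 t = M.get t} := by
    have hc : Continuous fun ω : Boundary N => ω.1 t := continuous_eval t
    have := (isOpen_discrete ({M.get t} : Set (Letter N))).preimage hc
    exact this
  exact this.measurableSet

lemma shadow_eq_pre (x : FreeGroup (Fin N)) : shadow x = pre x.toWord := by
  ext ω
  simp only [shadow, Set.mem_setOf_eq]
  rw [mem_pre_iff_ofFn]
  constructor
  · intro h
    have : (prefixProd ω.1 (wordLength x)).toWord = x.toWord := by rw [h]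
    rw [toWord_prefixProd ω.2] at this
    exact this
  · intro h
    show prefixProd ω.1 (wordLength x) = x
    rw [prefixProd]
    rw [show (List.ofFn fun i : Fin (wordLength x) => ω.1 i) = x.toWord from h]
    exact FreeGroup.mk_toWord

lemma measurableSet_shadow (x : FreeGroup (Fin N)) : MeasurableSet (shadow x) := by
  rw [shadow_eq_pre]; exact measurableSet_pre _

lemma pre_eq_empty_of_not_red {M : List (Letter N)} (h : ¬ RedW M) : pre M = ∅ := by
  ext ω
  simp only [Set.mem_empty_iff_false, iff_false]
  intro hmem
  apply h
  rw [← mem_pre_iff_ofFn.mp hmem]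
  exact redW_ofFn₀ ω.2 M.length

lemma actSeq_ge (h : FreeGroup (Fin N)) (ω : ℕ → Letter N) :
    ∃ c ≤ wordLength h, ∀ i, wordLength h ≤ i →
      actSeq h ω i = ω (i - (wordLength h - c) + c) := by
  refine ⟨Nat.findGreatest
      (fun c => ∀ i < c, h.toWord.reverse[i]? = some (invLetter (ω i))) h.toWord.length,
    Nat.findGreatest_le _, fun i hi => ?_⟩
  have hc : Nat.findGreatest
      (fun c => ∀ i < c, h.toWord.reverse[i]? = some (invLetter (ω i))) h.toWord.length
      ≤ h.toWord.length := Nat.findGreatest_le _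
  simp only [actSeq]
  rw [dif_neg (by unfold wordLength at hi; omega)]
  rfl

lemma act_preimage_subset (h x : FreeGroup (Fin N)) (hmk : wordLength h < wordLength x) :
    act h ⁻¹' shadow x ⊆ shadow x ∪
      ⋃ c ∈ Finset.range (wordLength h + 1), ⋃ v : Fin (2*c) → Letter N,
        pre (List.ofFn v ++ x.toWord.drop (wordLength h)) := by
  intro ω hmem
  simp only [Set.mem_preimage] at hmem
  by_cases hr : IsReduced (actSeq h ω.1)
  · right
    rw [show act h ω = ⟨actSeq h ω.1, hr⟩ from dif_pos hr] at hmem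
    rw [shadow_eq_pre] at hmem
    obtain ⟨c, hck, hcv⟩ := actSeq_ge h ω.1
    set k := wordLength h with hk
    set m := wordLength x with hm
    have hmlen : x.toWord.length = m := rfl
    refine Set.mem_iUnion₂.mpr ⟨c, Finset.mem_range.mpr (by omega), ?_⟩
    refine Set.mem_iUnion.mpr ⟨fun i => ω.1 i, ?_⟩
    intro t htl
    rw [List.length_append, List.length_ofFn, List.length_drop, hmlen] at htl
    rw [List.get_eq_getElem]
    by_cases htc : t < 2*c
    · rw [List.getElem_append_left (by simpa using htc)]
      simp
    · push_neg at htc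
      rw [List.getElem_append_right (by simpa using htc)]
      rw [List.getElem_drop]
      simp only [List.length_ofFn]
      have hs : k + (t - 2*c) < x.toWord.length := by rw [hmlen]; omega
      have h1 : actSeq h ω.1 (k + (t - 2*c)) = x.toWord.get ⟨k + (t - 2*c), hs⟩ :=
        hmem (k + (t - 2*c)) hs
      have h2 : actSeq h ω.1 (k + (t - 2*c)) = ω.1 (k + (t - 2*c) - (k - c) + c) :=
        hcv (k + (t - 2*c)) (by omega)
      have h3 : k + (t - 2*c) - (k - c) + c = t := by omega
      rw [h3] at h2
      rw [← h2, h1, List.get_eq_getElem]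
  · left
    rw [show act h ω = ω from dif_neg hr] at hmem
    exact hmem

lemma pre_eq_shadow_of_red {M : List (Letter N)} (h : RedW M) :
    pre M = shadow (FreeGroup.mk M) := by
  rw [shadow_eq_pre, toWord_mk_red h]

lemma mem_shadow_prefixProd_iff {ω' ω : Boundary N} {t : ℕ} :
    ω' ∈ shadow (prefixProd ω.1 t) ↔ ∀ s < t, ω'.1 s = ω.1 s := by
  rw [shadow_eq_pre, toWord_prefixProd ω.2]
  constructor
  · intro h s hs
    have := h s (by simpa using hs)
    simpa using this
  · intro h s hs
    have hs' : s < t := by simpa using hs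
    simp only [List.get_ofFn]
    simpa using h s hs'

end Aux

section Measure

variable {N : ℕ} {q : ℕ} (ν : Measure (Boundary N)) [IsProbabilityMeasure ν]

omit [IsProbabilityMeasure ν] in
lemma measure_pre_le (hq3 : 3 ≤ q)
    (hν : ∀ x : FreeGroup (Fin N), x ≠ 1 →
      ν (shadow x) = 1 / (((q : ℝ≥0∞) + 1) * (q : ℝ≥0∞) ^ (wordLength x - 1)))
    {M : List (Letter N)} (hM : M ≠ []) :
    ν (pre M) ≤ 1 / (((q : ℝ≥0∞) + 1) * (q : ℝ≥0∞) ^ (M.length - 1)) := by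
  by_cases hred : RedW M
  · rw [pre_eq_shadow_of_red hred]
    rw [hν _ (mk_red_ne_one hred hM), wordLength_mk_red hred]
  · rw [pre_eq_empty_of_not_red hred]
    simp

lemma ennreal_div_pow_le {Q R : ℝ≥0∞} (hQ1 : 1 ≤ Q) (hQt : Q ≠ ⊤) (hR0 : R ≠ 0) (hRt : R ≠ ⊤)
    {a b s : ℕ} (hab : a ≤ b + s) :
    1 / (R * Q ^ b) ≤ Q ^ s * (1 / (R * Q ^ a)) := by
  have hQ0 : Q ≠ 0 := by
    intro hh
    rw [hh] at hQ1
    simp at hQ1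
  have hA0 : R * Q ^ a ≠ 0 := mul_ne_zero hR0 (pow_ne_zero _ hQ0)
  have hAt : R * Q ^ a ≠ ⊤ := ENNReal.mul_ne_top hRt (ENNReal.pow_ne_top hQt)
  have hB0 : R * Q ^ b ≠ 0 := mul_ne_zero hR0 (pow_ne_zero _ hQ0)
  have hBt : R * Q ^ b ≠ ⊤ := ENNReal.mul_ne_top hRt (ENNReal.pow_ne_top hQt)
  have h1 : R * Q ^ a ≤ (R * Q ^ b) * Q ^ s := by
    rw [mul_assoc, ← pow_add]
    exact mul_le_mul_right (pow_le_pow_right₀ hQ1 hab) R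
  rw [one_div, one_div]
  calc (R * Q ^ b)⁻¹ = (R * Q ^ b)⁻¹ * ((R * Q ^ a) * (R * Q ^ a)⁻¹) := by
        rw [ENNReal.mul_inv_cancel hA0 hAt, mul_one]
      _ = ((R * Q ^ b)⁻¹ * (R * Q ^ a)) * (R * Q ^ a)⁻¹ := by ring
      _ ≤ ((R * Q ^ b)⁻¹ * ((R * Q ^ b) * Q ^ s)) * (R * Q ^ a)⁻¹ := by gcongr
      _ = Q ^ s * (R * Q ^ a)⁻¹ := by
        rw [← mul_assoc, ENNReal.inv_mul_cancel hB0 hBt, one_mul]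

/-- Per-shadow bound for the preimage under the boundary action. -/
lemma measure_preimage_shadow_le (hN : 2 ≤ N) (hq3 : 3 ≤ q)
    (hν : ∀ x : FreeGroup (Fin N), x ≠ 1 →
      ν (shadow x) = 1 / (((q : ℝ≥0∞) + 1) * (q : ℝ≥0∞) ^ (wordLength x - 1)))
    (h : FreeGroup (Fin N)) :
    ∃ C : ℝ≥0∞, C ≠ ⊤ ∧ ∀ x : FreeGroup (Fin N), x ≠ 1 →
      ν (act h ⁻¹' shadow x) ≤ C * ν (shadow x) := by
  set k := wordLength h with hk
  set Q : ℝ≥0∞ := (q : ℝ≥0∞) with hQdef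
  have hQ1 : 1 ≤ Q := by
    rw [hQdef]
    exact_mod_cast Nat.one_le_cast.mpr (by omega)
  have hQ0 : Q ≠ 0 := by
    intro hh
    rw [hh] at hQ1
    simp at hQ1
  have hQt : Q ≠ ⊤ := by rw [hQdef]; exact ENNReal.natCast_ne_top q
  have hR0 : Q + 1 ≠ 0 := by simp
  have hRt : Q + 1 ≠ ⊤ := by
    rw [hQdef]
    simp [ENNReal.add_ne_top]
  set W : ℝ≥0∞ := ((2 * N : ℕ) : ℝ≥0∞) with hWdef
  set C : ℝ≥0∞ := (Q + 1) * Q ^ k + (((k : ℝ≥0∞) + 1) * (W ^ (2 * k) * Q ^ k) + 1) with hC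
  have hCt : C ≠ ⊤ := by
    rw [hC]
    refine ENNReal.add_ne_top.mpr ⟨ENNReal.mul_ne_top hRt (ENNReal.pow_ne_top hQt), ?_⟩
    refine ENNReal.add_ne_top.mpr ⟨ENNReal.mul_ne_top ?_ ?_, by simp⟩
    · simp
    · exact ENNReal.mul_ne_top (ENNReal.pow_ne_top (by rw [hWdef]; exact ENNReal.natCast_ne_top _))
        (ENNReal.pow_ne_top hQt)
  refine ⟨C, hCt, ?_⟩
  intro x hx
  set m := wordLength x with hm
  have hm1 : 1 ≤ m := by
    rw [hm]
    by_contra hcon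
    have hlen0 : x.toWord.length = 0 := by
      have : wordLength x = x.toWord.length := rfl
      omega
    have : x.toWord = [] := List.length_eq_zero_iff.mp hlen0
    exact hx (FreeGroup.toWord_eq_nil_iff.mp this)
  have hshadow : ν (shadow x) = 1 / ((Q + 1) * Q ^ (m - 1)) := hν x hx
  have hDm0 : (Q + 1) * Q ^ (m - 1) ≠ 0 := mul_ne_zero hR0 (pow_ne_zero _ hQ0)
  have hDmt : (Q + 1) * Q ^ (m - 1) ≠ ⊤ := ENNReal.mul_ne_top hRt (ENNReal.pow_ne_top hQt)
  by_cases hcase : m ≤ k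
  · calc ν (act h ⁻¹' shadow x) ≤ 1 := prob_le_one
      _ = ((Q + 1) * Q ^ (m - 1)) * ν (shadow x) := by
          rw [hshadow, one_div, ENNReal.mul_inv_cancel hDm0 hDmt]
      _ ≤ C * ν (shadow x) := by
          refine mul_le_mul_left ?_ _
          calc (Q + 1) * Q ^ (m - 1) ≤ (Q + 1) * Q ^ k :=
                mul_le_mul_right (pow_le_pow_right₀ hQ1 (by omega)) _
            _ ≤ C := by rw [hC]; exact le_self_add
  · push_neg at hcase
    have hsub := act_preimage_subset h x (by omega)
    have hbound : ∀ c ∈ Finset.range (k + 1),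
        ν (⋃ v : Fin (2*c) → Letter N, pre (List.ofFn v ++ x.toWord.drop k))
          ≤ W ^ (2 * k) * Q ^ k * ν (shadow x) := by
      intro c hc
      rw [Finset.mem_range] at hc
      have hdroplen : (x.toWord.drop k).length = m - k := by
        rw [List.length_drop]
        rfl
      have hMlen : ∀ v : Fin (2*c) → Letter N,
          (List.ofFn v ++ x.toWord.drop k).length = 2*c + (m - k) := by
        intro v
        rw [List.length_append, List.length_ofFn, hdroplen]
      have hMne : ∀ v : Fin (2*c) → Letter N, List.ofFn v ++ x.toWord.drop k ≠ [] := by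
        intro v hcon
        have := congrArg List.length hcon
        rw [hMlen v] at this
        simp at this
        omega
      have hprebound : ∀ v : Fin (2*c) → Letter N,
          ν (pre (List.ofFn v ++ x.toWord.drop k)) ≤ Q ^ k * ν (shadow x) := by
        intro v
        calc ν (pre (List.ofFn v ++ x.toWord.drop k))
            ≤ 1 / ((Q + 1) * Q ^ ((List.ofFn v ++ x.toWord.drop k).length - 1)) :=
              measure_pre_le ν hq3 hν (hMne v)
          _ ≤ Q ^ k * (1 / ((Q + 1) * Q ^ (m - 1))) := by
              rw [hMlen v]
              exact ennreal_div_pow_le hQ1 hQt hR0 hRt (by omega)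
          _ = Q ^ k * ν (shadow x) := by rw [hshadow]
      calc ν (⋃ v : Fin (2*c) → Letter N, pre (List.ofFn v ++ x.toWord.drop k))
          ≤ ∑' v : Fin (2*c) → Letter N, ν (pre (List.ofFn v ++ x.toWord.drop k)) :=
            measure_iUnion_le _
        _ ≤ ∑' _v : Fin (2*c) → Letter N, Q ^ k * ν (shadow x) :=
            ENNReal.tsum_le_tsum hprebound
        _ = (Fintype.card (Fin (2*c) → Letter N) : ℝ≥0∞) * (Q ^ k * ν (shadow x)) := by
            rw [tsum_fintype, Finset.sum_const, Finset.card_univ, nsmul_eq_mul]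
        _ ≤ W ^ (2 * k) * (Q ^ k * ν (shadow x)) := by
            refine mul_le_mul_left ?_ _
            rw [Fintype.card_fun, hWdef]
            have hcard : Fintype.card (Letter N) = 2 * N := by
              simp [Fintype.card_prod]
              ring
            rw [hcard, Fintype.card_fin]
            have h2N : (1 : ℕ) ≤ 2 * N := by omega
            calc ((2 * N) ^ (2 * c) : ℕ) ≤ (((2 * N) ^ (2 * k) : ℕ) : ℝ≥0∞) := by
                  exact_mod_cast Nat.pow_le_pow_right h2N (by omega)
              _ = ((2 * N : ℕ) : ℝ≥0∞) ^ (2 * k) := by push_cast; ring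
        _ = W ^ (2 * k) * Q ^ k * ν (shadow x) := by rw [mul_assoc]
    calc ν (act h ⁻¹' shadow x)
        ≤ ν (shadow x ∪ ⋃ c ∈ Finset.range (k + 1), ⋃ v : Fin (2*c) → Letter N,
            pre (List.ofFn v ++ x.toWord.drop k)) := measure_mono hsub
      _ ≤ ν (shadow x) + ν (⋃ c ∈ Finset.range (k + 1), ⋃ v : Fin (2*c) → Letter N,
            pre (List.ofFn v ++ x.toWord.drop k)) := measure_union_le _ _
      _ ≤ ν (shadow x) + ∑ c ∈ Finset.range (k + 1),
            ν (⋃ v : Fin (2*c) → Letter N, pre (List.ofFn v ++ x.toWord.drop k)) := by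
          gcongr
          exact measure_biUnion_finset_le _ _
      _ ≤ ν (shadow x) + ∑ _c ∈ Finset.range (k + 1), W ^ (2 * k) * Q ^ k * ν (shadow x) := by
          gcongr with c hc
          exact hbound c hc
      _ = (1 + ((k : ℝ≥0∞) + 1) * (W ^ (2 * k) * Q ^ k)) * ν (shadow x) := by
          rw [Finset.sum_const, Finset.card_range, nsmul_eq_mul]
          push_cast
          ring
      _ ≤ C * ν (shadow x) := by
          refine mul_le_mul_left ?_ _
          rw [hC]
          calc 1 + ((k : ℝ≥0∞) + 1) * (W ^ (2 * k) * Q ^ k)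
              ≤ (((k : ℝ≥0∞) + 1) * (W ^ (2 * k) * Q ^ k) + 1) := by rw [add_comm]
            _ ≤ (Q + 1) * Q ^ k + (((k : ℝ≥0∞) + 1) * (W ^ (2 * k) * Q ^ k) + 1) :=
                le_add_self

instance : Countable (FreeGroup (Fin N)) := FreeGroup.toWord_injective.countable

omit [IsProbabilityMeasure ν] in
lemma one_le_wordLength {x : FreeGroup (Fin N)} (hx : x ≠ 1) : 1 ≤ wordLength x := by
  by_contra hcon
  have hlen0 : x.toWord.length = 0 := by
    have : wordLength x = x.toWord.length := rfl
    omega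
  exact hx (FreeGroup.toWord_eq_nil_iff.mp (List.length_eq_zero_iff.mp hlen0))

omit [IsProbabilityMeasure ν] in
lemma prefixProd_ne_one {ω : Boundary N} {t : ℕ} (ht : 1 ≤ t) : prefixProd ω.1 t ≠ 1 := by
  intro hcon
  have := wordLength_prefixProd ω.2 t
  rw [hcon] at this
  have : wordLength (1 : FreeGroup (Fin N)) = 0 := by
    show (FreeGroup.toWord 1).length = 0
    rw [FreeGroup.toWord_one]
    rfl
  omega

omit [IsProbabilityMeasure ν] in
lemma take_ofFn_eq (ω : ℕ → Letter N) {i t : ℕ} (h : i ≤ t) :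
    (List.ofFn fun s : Fin t => ω s).take i = List.ofFn fun s : Fin i => ω s := by
  rw [ofFn_split ω h]
  exact List.take_left' (by simp)

omit [IsProbabilityMeasure ν] in
lemma take_toWord_prefixProd {ω : Boundary N} {i t : ℕ} (h : i ≤ t) :
    FreeGroup.mk ((prefixProd ω.1 t).toWord.take i) = prefixProd ω.1 i := by
  rw [toWord_prefixProd ω.2, take_ofFn_eq ω.1 h]
  rfl

omit [IsProbabilityMeasure ν] in
lemma exists_shadow_subset {U : Set (Boundary N)} (hU : IsOpen U) {ω : Boundary N}
    (hω : ω ∈ U) : ∃ t : ℕ, 1 ≤ t ∧ shadow (prefixProd ω.1 t) ⊆ U := by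
  obtain ⟨V, hV, rfl⟩ := isOpen_induced_iff.mp hU
  obtain ⟨I, u, hIu, hpi⟩ := isOpen_pi_iff.mp hV ω.1 hω
  refine ⟨(I.sup id) + 1, by omega, ?_⟩
  intro ω' hω'
  rw [mem_shadow_prefixProd_iff] at hω'
  show ω'.1 ∈ V
  apply hpi
  intro a ha
  have hle : a < I.sup id + 1 := by
    have := Finset.le_sup (f := id) ha
    simp only [id] at this
    omega
  have heq : ω'.1 a = ω.1 a := hω' a hle
  rw [heq]
  exact (hIu a ha).2

omit [IsProbabilityMeasure ν] in
/-- Every open subset of the boundary is a countable disjoint union of shadows. -/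
lemma isOpen_eq_iUnion_shadow {U : Set (Boundary N)} (hU : IsOpen U) :
    ∃ D : Set (FreeGroup (Fin N)), (∀ x ∈ D, x ≠ 1) ∧ U = ⋃ x ∈ D, shadow x ∧
      D.PairwiseDisjoint shadow := by
  classical
  set D : Set (FreeGroup (Fin N)) := {x | x ≠ 1 ∧ shadow x ⊆ U ∧
    ∀ i, 1 ≤ i → i < wordLength x → ¬ shadow (FreeGroup.mk (x.toWord.take i)) ⊆ U} with hD
  have hmemD : ∀ x ∈ D, x ≠ 1 := fun x hx => hx.1
  refine ⟨D, hmemD, ?_, ?_⟩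
  · refine Set.Subset.antisymm ?_ ?_
    · intro ω hω
      have hex : ∃ t : ℕ, 1 ≤ t ∧ shadow (prefixProd ω.1 t) ⊆ U :=
        exists_shadow_subset hU hω
      set t0 := Nat.find hex with ht0
      obtain ⟨ht01, ht0sub⟩ := Nat.find_spec hex
      have hmin : ∀ s, s < t0 → ¬ (1 ≤ s ∧ shadow (prefixProd ω.1 s) ⊆ U) :=
        fun s hs => Nat.find_min hex hs
      set x := prefixProd ω.1 t0 with hx
      have hwlx : wordLength x = t0 := wordLength_prefixProd ω.2 t0
      have hxD : x ∈ D := by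
        refine ⟨prefixProd_ne_one ht01, ht0sub, ?_⟩
        intro i hi1 hit
        rw [hwlx] at hit
        rw [hx, take_toWord_prefixProd (le_of_lt hit)]
        intro hcon
        exact hmin i hit ⟨hi1, hcon⟩
      refine Set.mem_biUnion hxD ?_
      exact mem_shadow_prefixProd_iff.mpr (fun s _ => rfl)
    · intro ω hω
      obtain ⟨x, hxD, hωx⟩ := Set.mem_iUnion₂.mp hω
      exact hxD.2.1 hωx
  · intro x hx y hy hxy
    rw [Function.onFun]
    rw [Set.disjoint_left]
    intro ω hωx hωy
    have hpx : prefixProd ω.1 (wordLength x) = x := hωx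
    have hpy : prefixProd ω.1 (wordLength y) = y := hωy
    have key : ∀ x' y' : FreeGroup (Fin N), x' ∈ D → y' ∈ D →
        prefixProd ω.1 (wordLength x') = x' → prefixProd ω.1 (wordLength y') = y' →
        wordLength x' < wordLength y' → False := by
      intro x' y' hx'D hy'D hpx' hpy' hlt
      have h1 : FreeGroup.mk (y'.toWord.take (wordLength x')) = x' := by
        rw [← hpy', take_toWord_prefixProd (le_of_lt hlt), hpx']
      have h2 := hy'D.2.2 (wordLength x') (one_le_wordLength hx'D.1) hlt
      rw [h1] at h2
      exact h2 hx'D.2.1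
    rcases lt_trichotomy (wordLength x) (wordLength y) with h | h | h
    · exact key x y hx hy hpx hpy h
    · exact hxy (by rw [← hpx, ← hpy, h])
    · exact key y x hy hx hpy hpx h

instance : TopologicalSpace.PseudoMetrizableSpace (Boundary N) :=
  (Topology.IsInducing.subtypeVal
    (t := setOf (IsReduced (N := N)))).pseudoMetrizableSpace

/-- Quasi-invariance: the boundary action maps null sets to null sets. -/
lemma measure_preimage_act_eq_zero (hq3 : 3 ≤ q)
    (hν : ∀ x : FreeGroup (Fin N), x ≠ 1 →
      ν (shadow x) = 1 / (((q : ℝ≥0∞) + 1) * (q : ℝ≥0∞) ^ (wordLength x - 1)))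
    (h : FreeGroup (Fin N)) {E : Set (Boundary N)} (hE : ν E = 0) (hN : 2 ≤ N) :
    ν (act h ⁻¹' E) = 0 := by
  obtain ⟨C, hCt, hCb⟩ := measure_preimage_shadow_le ν hN hq3 hν h
  letI : PseudoMetricSpace (Boundary N) := TopologicalSpace.pseudoMetrizableSpacePseudoMetric _
  haveI : ν.OuterRegular := inferInstance
  have hE' : ν (toMeasurable ν E) = 0 := by rw [measure_toMeasurable]; exact hE
  have key : ∀ ε : ℝ≥0∞, 0 < ε → ν (act h ⁻¹' E) ≤ C * ε := by
    intro ε hε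
    obtain ⟨U, hUsup, hUopen, hUlt⟩ :=
      (toMeasurable ν E).exists_isOpen_lt_of_lt _ (by rw [hE']; exact hε)
    obtain ⟨D, hD1, hDeq, hDdisj⟩ := isOpen_eq_iUnion_shadow hUopen
    have hDcount : Countable ↥D := (Set.to_countable D).to_subtype
    have hdisj' : Pairwise (Function.onFun Disjoint fun x : ↥D => shadow (x : FreeGroup (Fin N)))
        := fun a b hab => hDdisj a.2 b.2 (fun e => hab (Subtype.ext e))
    calc ν (act h ⁻¹' E)
        ≤ ν (act h ⁻¹' U) :=
          measure_mono (Set.preimage_mono ((subset_toMeasurable ν E).trans hUsup))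
      _ = ν (⋃ x : ↥D, act h ⁻¹' shadow (x : FreeGroup (Fin N))) := by
          rw [hDeq, Set.biUnion_eq_iUnion, Set.preimage_iUnion]
      _ ≤ ∑' x : ↥D, ν (act h ⁻¹' shadow (x : FreeGroup (Fin N))) := measure_iUnion_le _
      _ ≤ ∑' x : ↥D, C * ν (shadow (x : FreeGroup (Fin N))) :=
          ENNReal.tsum_le_tsum (fun x => hCb x (hD1 x x.2))
      _ = C * ∑' x : ↥D, ν (shadow (x : FreeGroup (Fin N))) := ENNReal.tsum_mul_left
      _ = C * ν U := by
          congr 1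
          rw [hDeq, Set.biUnion_eq_iUnion]
          exact (measure_iUnion hdisj' (fun x => measurableSet_shadow _)).symm
      _ ≤ C * ε := mul_le_mul_right hUlt.le C
  by_contra hne
  set S := ν (act h ⁻¹' E) with hS
  have hS0 : S ≠ 0 := hne
  have hSt : S ≠ ⊤ := measure_ne_top ν _
  set C' := max C 1 with hC'
  have hC'0 : C' ≠ 0 := by simp [hC']
  have hC't : C' ≠ ⊤ := by simp [hC', hCt]
  have hεpos : 0 < S / (2 * C') := 
    ENNReal.div_pos hS0 (ENNReal.mul_ne_top (by simp) hC't)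
  have h1 : S ≤ C * (S / (2 * C')) := key _ hεpos
  have h2 : C * (S / (2 * C')) ≤ C' * (S / (2 * C')) :=
    mul_le_mul_left (le_max_left _ _) _
  have h3 : C' * (S / (2 * C')) = S / 2 := by
    rw [ENNReal.div_eq_inv_mul, ENNReal.mul_inv (Or.inl (by simp)) (Or.inl (by simp)),
      ← mul_assoc, ← mul_assoc]
    rw [mul_comm C' 2⁻¹, mul_assoc 2⁻¹ C' C'⁻¹, ENNReal.mul_inv_cancel hC'0 hC't, mul_one]
    rw [ENNReal.div_eq_inv_mul]
  have h4 : S / 2 < S := ENNReal.half_lt_self hS0 hSt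
  rw [h3] at h2
  exact absurd (le_trans h1 h2) (not_le.mpr h4)

end Measure

section InnerValue

variable {N : ℕ} {q : ℕ}

/-- The value of the matrix coefficient `⟨π(g)1,1⟩` for `|g| = k`. -/
def innerVal (q k : ℕ) : ℝ :=
  (q : ℝ) ^ (-(k : ℝ) / 2) * (1 + k * ((q : ℝ) - 1) / ((q : ℝ) + 1))

lemma mem_shadow_take_iff {g : FreeGroup (Fin N)} {ω : Boundary N} {i : ℕ}
    (hik : i ≤ g.toWord.length) :
    ω ∈ shadow (FreeGroup.mk (g.toWord.take i)) ↔ i ≤ matchLen g.toWord ω.1 := by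
  have hlen : (g.toWord.take i).length = i := by
    rw [List.length_take]
    omega
  rw [shadow_eq_pre, toWord_mk_red ((redW_toWord g).take i)]
  have hofneq : (List.ofFn fun s : Fin (g.toWord.take i).length => ω.1 s) =
      (List.ofFn fun s : Fin i => ω.1 s) := by
    refine List.ext_getElem (by simp [hlen]) ?_
    intro n h1 h2
    simp
  show ω ∈ pre (g.toWord.take i) ↔ _
  rw [mem_pre_iff_ofFn, hofneq, ofFn_eq_take_iff, QQ_iff_le_matchLen]

open scoped Classical in
lemma integrand_eq (hq3 : 3 ≤ q) (g : FreeGroup (Fin N)) (ω : Boundary N) :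
    (q : ℝ) ^ ((busemann ω.1 g : ℝ) / 2) =
      (q : ℝ) ^ (-(g.toWord.length : ℝ) / 2) *
        (1 + ∑ i ∈ Finset.range g.toWord.length,
          Set.indicator (shadow (FreeGroup.mk (g.toWord.take (i + 1))))
            (fun _ => (q : ℝ) ^ (i + 1) - (q : ℝ) ^ i) ω) := by
  set r : ℝ := (q : ℝ) with hr
  have hr0 : (0 : ℝ) < r := by
    rw [hr]
    exact_mod_cast Nat.pos_of_ne_zero (by omega)
  set k := g.toWord.length with hk
  set j := matchLen g.toWord ω.1 with hj
  have hjk : j ≤ k := matchLen_le _ _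
  have hbus : busemann ω.1 g = 2 * (j : ℤ) - (k : ℤ) := busemann_eq g ω.2
  have hexp : ((busemann ω.1 g : ℤ) : ℝ) / 2 = (j : ℝ) + (-(k : ℝ) / 2) := by
    rw [hbus]
    push_cast
    ring
  rw [hexp, Real.rpow_add hr0, Real.rpow_natCast]
  have hsum : ∑ i ∈ Finset.range k,
      Set.indicator (shadow (FreeGroup.mk (g.toWord.take (i + 1))))
        (fun _ => r ^ (i + 1) - r ^ i) ω = r ^ j - 1 := by
    have hterm : ∀ i ∈ Finset.range k,
        Set.indicator (shadow (FreeGroup.mk (g.toWord.take (i + 1))))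
          (fun _ => r ^ (i + 1) - r ^ i) ω =
        if i + 1 ≤ j then r ^ (i + 1) - r ^ i else 0 := by
      intro i hi
      rw [Finset.mem_range] at hi
      rw [Set.indicator_apply]
      congr 1
      simp only [eq_iff_iff]
      exact mem_shadow_take_iff (by omega)
    rw [Finset.sum_congr rfl hterm]
    rw [Finset.sum_ite, Finset.sum_const_zero, add_zero]
    have hfilter : Finset.filter (fun i => i + 1 ≤ j) (Finset.range k) = Finset.range j := by
      ext i
      simp only [Finset.mem_filter, Finset.mem_range]
      omega
    rw [hfilter, Finset.sum_range_sub (fun i => r ^ i), pow_zero]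
  rw [hsum]
  ring

variable (ν : Measure (Boundary N)) [IsProbabilityMeasure ν]

lemma integral_busemann (hq3 : 3 ≤ q)
    (hν : ∀ x : FreeGroup (Fin N), x ≠ 1 →
      ν (shadow x) = 1 / (((q : ℝ≥0∞) + 1) * (q : ℝ≥0∞) ^ (wordLength x - 1)))
    (g : FreeGroup (Fin N)) :
    ∫ ω, (q : ℝ) ^ ((busemann ω.1 g : ℝ) / 2) ∂ν = innerVal q (wordLength g) := by
  classical
  set r : ℝ := (q : ℝ) with hr
  have hr0 : (0 : ℝ) < r := by
    rw [hr]
    exact_mod_cast Nat.pos_of_ne_zero (by omega)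
  have hr1 : (3 : ℝ) ≤ r := by rw [hr]; exact_mod_cast hq3
  set k := wordLength g with hk
  have hkk : g.toWord.length = k := rfl
  rw [integral_congr_ae (ae_of_all _ (fun ω => integrand_eq hq3 g ω))]
  rw [integral_const_mul]
  have hint : ∀ i ∈ Finset.range g.toWord.length,
      Integrable (Set.indicator (shadow (FreeGroup.mk (g.toWord.take (i + 1))))
        (fun _ => r ^ (i + 1) - r ^ i)) ν :=
    fun i _ => (integrable_const _).indicator (measurableSet_shadow _)
  rw [integral_add (integrable_const 1) (integrable_finset_sum _ hint)]
  rw [integral_finset_sum _ hint]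
  rw [integral_const, probReal_univ, smul_eq_mul, mul_one]
  have hterm : ∀ i ∈ Finset.range g.toWord.length,
      ∫ ω, Set.indicator (shadow (FreeGroup.mk (g.toWord.take (i + 1))))
        (fun _ => r ^ (i + 1) - r ^ i) ω ∂ν = (r - 1) / (r + 1) := by
    intro i hi
    rw [Finset.mem_range, hkk] at hi
    rw [integral_indicator_const _ (measurableSet_shadow _)]
    have htne : g.toWord.take (i + 1) ≠ [] := by
      intro hcon
      have := congrArg List.length hcon
      rw [List.length_take, hkk] at this
      simp at this
      omega
    have hx1 : FreeGroup.mk (g.toWord.take (i + 1)) ≠ 1 :=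
      mk_red_ne_one ((redW_toWord g).take _) htne
    have hwl : wordLength (FreeGroup.mk (g.toWord.take (i + 1))) = i + 1 := by
      rw [wordLength_mk_red ((redW_toWord g).take _), List.length_take]
      omega
    rw [Measure.real, hν _ hx1, hwl]
    have hmeas : ((1 : ℝ≥0∞) / (((q : ℝ≥0∞) + 1) * (q : ℝ≥0∞) ^ (i + 1 - 1))).toReal =
        1 / ((r + 1) * r ^ i) := by
      have hden : (((q : ℝ≥0∞) + 1) * (q : ℝ≥0∞) ^ (i + 1 - 1)).toReal = (r + 1) * r ^ i := by
        rw [ENNReal.toReal_mul, ENNReal.toReal_pow,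
          ENNReal.toReal_add (by simp) (by simp), ENNReal.toReal_natCast, ENNReal.toReal_one]
        simp [hr]
      rw [ENNReal.toReal_div, ENNReal.toReal_one, hden]
    rw [hmeas, smul_eq_mul]
    have h1 : r ^ i ≠ 0 := pow_ne_zero _ (by linarith)
    have h2 : (r + 1) ≠ 0 := by linarith
    field_simp
    ring
  rw [Finset.sum_congr rfl hterm, Finset.sum_const, Finset.card_range, nsmul_eq_mul]
  rw [innerVal, hkk]
  ring

lemma inner_pi_one (hq3 : 3 ≤ q)
    (hν : ∀ x : FreeGroup (Fin N), x ≠ 1 →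
      ν (shadow x) = 1 / (((q : ℝ≥0∞) + 1) * (q : ℝ≥0∞) ^ (wordLength x - 1)))
    (π : FreeGroup (Fin N) →* (Lp ℂ 2 ν →L[ℂ] Lp ℂ 2 ν))
    (hπ : ∀ (g : FreeGroup (Fin N)) (ψ : Lp ℂ 2 ν),
      (π g ψ : Boundary N → ℂ) =ᵐ[ν]
        fun ω => (((q : ℝ) ^ ((busemann ω.1 g : ℝ) / 2) : ℝ) : ℂ) * ψ (act g⁻¹ ω))
    (g : FreeGroup (Fin N)) (hN : 2 ≤ N) :
    (inner ℂ (π g (oneL ν)) (oneL ν) : ℂ) = ((innerVal q (wordLength g) : ℝ) : ℂ) := by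
  have hone : ((oneL ν : Lp ℂ 2 ν) : Boundary N → ℂ) =ᵐ[ν] fun _ => 1 :=
    MemLp.coeFn_toLp _
  have hE : ν {x : Boundary N | ¬ ((oneL ν : Lp ℂ 2 ν) : Boundary N → ℂ) x = (1 : ℂ)} = 0 := by
    rw [← ae_iff]
    exact hone
  have hcomp : ∀ᵐ ω ∂ν, ((oneL ν : Lp ℂ 2 ν) : Boundary N → ℂ) (act g⁻¹ ω) = 1 := by
    have hqi := measure_preimage_act_eq_zero ν hq3 hν g⁻¹ hE hN
    rw [ae_iff]
    exact hqi
  have hfun : (π g (oneL ν) : Boundary N → ℂ) =ᵐ[ν]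
      fun ω => ((((q : ℝ) ^ ((busemann ω.1 g : ℝ) / 2) : ℝ)) : ℂ) := by
    filter_upwards [hπ g (oneL ν), hcomp] with ω h1 h2
    rw [h1, h2, mul_one]
  rw [MeasureTheory.L2.inner_def]
  have hΙ : ∫ ω, (inner ℂ ((π g (oneL ν) : Boundary N → ℂ) ω)
        (((oneL ν : Lp ℂ 2 ν) : Boundary N → ℂ) ω) : ℂ) ∂ν =
      ∫ ω, ((((q : ℝ) ^ ((busemann ω.1 g : ℝ) / 2) : ℝ)) : ℂ) ∂ν := by
    refine integral_congr_ae ?_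
    filter_upwards [hfun, hone] with ω h1 h2
    rw [RCLike.inner_apply, h1, h2, one_mul]
    exact Complex.conj_ofReal _
  rw [hΙ]
  have hor := integral_ofReal (𝕜 := ℂ) (μ := ν)
    (f := fun ω : Boundary N => (q : ℝ) ^ ((busemann ω.1 g : ℝ) / 2))
  exact hor.trans (congrArg Complex.ofReal (integral_busemann ν hq3 hν g))

lemma innerVal_nonneg (hq3 : 3 ≤ q) (k : ℕ) : 0 ≤ innerVal q k := by
  have hr0 : (0 : ℝ) < (q : ℝ) := by exact_mod_cast Nat.pos_of_ne_zero (by omega)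
  have hr1 : (1 : ℝ) ≤ (q : ℝ) := by exact_mod_cast (by omega : 1 ≤ q)
  refine mul_nonneg (Real.rpow_nonneg hr0.le _) ?_
  have h1 : (0 : ℝ) ≤ (k : ℝ) * ((q : ℝ) - 1) / ((q : ℝ) + 1) := by
    apply div_nonneg
    · exact mul_nonneg (Nat.cast_nonneg k) (by linarith)
    · linarith
  linarith

lemma sq_innerVal (hq3 : 3 ≤ q) (k : ℕ) :
    innerVal q k ^ 2 =
      ((q : ℝ) ^ k)⁻¹ * (((q : ℝ) + 1) + k * ((q : ℝ) - 1)) ^ 2 / ((q : ℝ) + 1) ^ 2 := by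
  set r : ℝ := (q : ℝ) with hr
  have hr0 : (0 : ℝ) < r := by
    rw [hr]
    exact_mod_cast Nat.pos_of_ne_zero (by omega)
  have hr3 : (3 : ℝ) ≤ r := by rw [hr]; exact_mod_cast hq3
  have hsq : (r ^ (-(k : ℝ) / 2)) ^ 2 = (r ^ k)⁻¹ := by
    rw [sq, ← Real.rpow_add hr0]
    have : -(k : ℝ) / 2 + -(k : ℝ) / 2 = -(k : ℝ) := by ring
    rw [this, Real.rpow_neg hr0.le, Real.rpow_natCast]
  rw [innerVal, mul_pow, hsq]
  have h2 : (r + 1) ≠ 0 := by linarith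
  field_simp
  rw [hr]; ring

end InnerValue

section Counting

variable {N : ℕ}

/-- The finset of reduced words of length `k`. -/
def redLists (N : ℕ) : ℕ → Finset (List (Letter N))
  | 0 => {[]}
  | (k + 1) => (redLists N k).biUnion fun L =>
      (Finset.univ.filter fun a : Letter N => ∀ b ∈ L.getLast?, a ≠ invLetter b).image
        fun a => L ++ [a]

lemma mem_redLists {k : ℕ} {L : List (Letter N)} :
    L ∈ redLists N k ↔ L.length = k ∧ RedW L := by
  induction k generalizing L with
  | zero =>
    constructor
    · intro h
      rw [redLists, Finset.mem_singleton] at h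
      subst h
      exact ⟨rfl, List.isChain_nil⟩
    · rintro ⟨hl, _⟩
      rw [redLists, Finset.mem_singleton]
      exact List.length_eq_zero_iff.mp hl
  | succ k ih =>
    rw [redLists]
    simp only [Finset.mem_biUnion, Finset.mem_image, Finset.mem_filter, Finset.mem_univ,
      true_and]
    constructor
    · rintro ⟨M, hM, a, ha, rfl⟩
      obtain ⟨hlen, hred⟩ := ih.mp hM
      refine ⟨by simp [hlen], ?_⟩
      rw [RedW, List.isChain_append]
      refine ⟨hred, List.isChain_singleton a, ?_⟩
      intro x hx y hy
      rw [List.head?_cons, Option.mem_some_iff] at hy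
      subst hy
      exact ha x hx
    · rintro ⟨hlen, hred⟩
      have hne : L ≠ [] := by
        intro h
        subst h
        simp at hlen
      have hsplit : L.dropLast ++ [L.getLast hne] = L := List.dropLast_append_getLast hne
      have hred' := hred
      rw [RedW, ← hsplit, List.isChain_append] at hred'
      refine ⟨L.dropLast, ih.mpr ⟨by rw [List.length_dropLast, hlen]; rfl, hred'.1⟩,
        L.getLast hne, ?_, hsplit⟩
      intro b hb
      exact hred'.2.2 b hb (L.getLast hne) (by simp)

lemma card_letter (hN : 2 ≤ N) : Fintype.card (Letter N) = 2 * N := by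
  simp only [Fintype.card_prod, Fintype.card_fin, Fintype.card_bool]
  ring

lemma redLists_filter_card (hN : 2 ≤ N) {L : List (Letter N)} (hne : L ≠ []) :
    (Finset.univ.filter fun a : Letter N => ∀ b ∈ L.getLast?, a ≠ invLetter b).card
      = 2 * N - 1 := by
  have hc : L.getLast? = some (L.getLast hne) := List.getLast?_eq_getLast hne
  have heq : (Finset.univ.filter fun a : Letter N => ∀ b ∈ L.getLast?, a ≠ invLetter b)
      = Finset.univ.erase (invLetter (L.getLast hne)) := by
    rw [← Finset.filter_ne']
    apply Finset.filter_congr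
    intro a _
    rw [hc]
    simp
  rw [heq, Finset.card_erase_of_mem (Finset.mem_univ _), Finset.card_univ, card_letter hN]

lemma card_redLists (hN : 2 ≤ N) : ∀ k : ℕ, 1 ≤ k →
    (redLists N k).card = 2 * N * (2 * N - 1) ^ (k - 1) := by
  intro k
  induction k with
  | zero => omega
  | succ k ih =>
    intro _
    rcases Nat.eq_zero_or_pos k with hk0 | hk1
    · subst hk0
      rw [redLists, redLists]
      rw [Finset.singleton_biUnion]
      rw [Finset.card_image_of_injective _ (fun a b h => by simpa using h)]
      have : (Finset.univ.filter fun a : Letter N =>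
          ∀ b ∈ ([] : List (Letter N)).getLast?, a ≠ invLetter b) = Finset.univ := by
        apply Finset.filter_true_of_mem
        intro a _
        simp
      rw [this, Finset.card_univ, card_letter hN]
      simp
    · have hdisj : ∀ L1 ∈ redLists N k, ∀ L2 ∈ redLists N k, L1 ≠ L2 →
          Disjoint ((Finset.univ.filter fun a : Letter N =>
              ∀ b ∈ L1.getLast?, a ≠ invLetter b).image fun a => L1 ++ [a])
            ((Finset.univ.filter fun a : Letter N =>
              ∀ b ∈ L2.getLast?, a ≠ invLetter b).image fun a => L2 ++ [a]) := by
        intro L1 _ L2 _ hne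
        rw [Finset.disjoint_left]
        rintro z hz1 hz2
        obtain ⟨a1, _, rfl⟩ := Finset.mem_image.mp hz1
        obtain ⟨a2, _, he⟩ := Finset.mem_image.mp hz2
        obtain ⟨h1, h2⟩ := List.append_inj' he.symm rfl
        exact hne h1
      rw [redLists, Finset.card_biUnion hdisj]
      have hterm : ∀ L ∈ redLists N k,
          ((Finset.univ.filter fun a : Letter N =>
            ∀ b ∈ L.getLast?, a ≠ invLetter b).image fun a => L ++ [a]).card = 2 * N - 1 := by
        intro L hL
        obtain ⟨hlen, _⟩ := mem_redLists.mp hL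
        have hne : L ≠ [] := by
          intro h
          subst h
          simp at hlen
          omega
        rw [Finset.card_image_of_injective _ (fun a b h => by simpa using h)]
        exact redLists_filter_card hN hne
      rw [Finset.sum_congr rfl hterm, Finset.sum_const, smul_eq_mul, ih hk1]
      have h1 : k + 1 - 1 = (k - 1) + 1 := by omega
      rw [h1, pow_succ]
      ring



/-- The ball as a finset. -/
def ballF (N n : ℕ) : Finset (FreeGroup (Fin N)) :=
  (Finset.range (n + 1)).biUnion fun k => (redLists N k).image FreeGroup.mk

lemma coe_ballF (n : ℕ) : (ballF N n : Set (FreeGroup (Fin N))) = ball N n := by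
  ext g
  rw [Finset.mem_coe, ballF, Finset.mem_biUnion]
  constructor
  · rintro ⟨k, hk, hg⟩
    obtain ⟨L, hL, rfl⟩ := Finset.mem_image.mp hg
    obtain ⟨hlen, hred⟩ := mem_redLists.mp hL
    rw [Finset.mem_range] at hk
    show wordLength (FreeGroup.mk L) ≤ n
    rw [wordLength_mk_red hred, hlen]
    omega
  · intro hg
    refine ⟨wordLength g, Finset.mem_range.mpr (by exact Nat.lt_succ_of_le hg), ?_⟩
    refine Finset.mem_image.mpr ⟨g.toWord, mem_redLists.mpr ⟨rfl, redW_toWord g⟩, ?_⟩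
    exact FreeGroup.mk_toWord

lemma wordLength_of_mem_image {k : ℕ} {g : FreeGroup (Fin N)}
    (hg : g ∈ (redLists N k).image FreeGroup.mk) : wordLength g = k := by
  obtain ⟨L, hL, rfl⟩ := Finset.mem_image.mp hg
  obtain ⟨hlen, hred⟩ := mem_redLists.mp hL
  rw [wordLength_mk_red hred, hlen]

lemma sum_ballF (n : ℕ) (F : FreeGroup (Fin N) → ℝ) (φ : ℕ → ℝ)
    (hF : ∀ g, F g = φ (wordLength g)) (hN : 2 ≤ N) :
    ∑ g ∈ ballF N n, F g =
      φ 0 + ∑ i ∈ Finset.range n, (2 * N * (2 * N - 1) ^ i : ℕ) * φ (i + 1) := by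
  have hdisj : ∀ k1 ∈ Finset.range (n + 1), ∀ k2 ∈ Finset.range (n + 1), k1 ≠ k2 →
      Disjoint ((redLists N k1).image FreeGroup.mk) ((redLists N k2).image FreeGroup.mk) := by
    intro k1 _ k2 _ hne
    rw [Finset.disjoint_left]
    intro g hg1 hg2
    exact hne ((wordLength_of_mem_image hg1).symm.trans (wordLength_of_mem_image hg2))
  rw [ballF, Finset.sum_biUnion hdisj]
  have hinner : ∀ k ∈ Finset.range (n + 1),
      ∑ g ∈ (redLists N k).image FreeGroup.mk, F g = (redLists N k).card * φ k := by
    intro k _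
    rw [Finset.sum_image ?hinj]
    case hinj =>
      intro L1 hL1 L2 hL2 he
      exact mk_red_injective (mem_redLists.mp hL1).2 (mem_redLists.mp hL2).2 he
    have : ∀ L ∈ redLists N k, F (FreeGroup.mk L) = φ k := by
      intro L hL
      obtain ⟨hlen, hred⟩ := mem_redLists.mp hL
      rw [hF, wordLength_mk_red hred, hlen]
    rw [Finset.sum_congr rfl this, Finset.sum_const, nsmul_eq_mul]
  rw [Finset.sum_congr rfl hinner, Finset.sum_range_succ']
  have h0 : ((redLists N 0).card : ℝ) * φ 0 = φ 0 := by
    rw [redLists]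
    simp
  rw [h0]
  rw [add_comm]
  congr 1
  apply Finset.sum_congr rfl
  intro i _
  rw [card_redLists hN (i + 1) (by omega)]
  simp

end Counting

section Final

lemma sum_sq_closed (a b : ℝ) (n : ℕ) :
    ∑ i ∈ Finset.range n, (b + ((i : ℝ) + 1) * a) ^ 2 =
      a ^ 2 * ((n : ℝ) * ((n : ℝ) + 1) * (2 * (n : ℝ) + 1)) / 6 +
        a * b * ((n : ℝ) * ((n : ℝ) + 1)) + b ^ 2 * (n : ℝ) := by
  induction n with
  | zero => simp
  | succ n ih =>
    rw [Finset.sum_range_succ, ih]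
    push_cast
    ring

end Final

theorem M_one_ball_asymptotic {N : ℕ} (hN : 2 ≤ N) {q : ℕ} (hq : q = 2 * N - 1)
    (ν : Measure (Boundary N)) [IsProbabilityMeasure ν]
    (hν : ∀ x : FreeGroup (Fin N), x ≠ 1 →
      ν (shadow x) = 1 / (((q : ℝ≥0∞) + 1) * (q : ℝ≥0∞) ^ (wordLength x - 1)))
    (π : FreeGroup (Fin N) →* (Lp ℂ 2 ν →L[ℂ] Lp ℂ 2 ν))
    (hπ_unitary : ∀ (g : FreeGroup (Fin N)) (ψ : Lp ℂ 2 ν), ‖π g ψ‖ = ‖ψ‖)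
    (hπ : ∀ (g : FreeGroup (Fin N)) (ψ : Lp ℂ 2 ν),
      (π g ψ : Boundary N → ℂ) =ᵐ[ν]
        fun ω => (((q : ℝ) ^ ((busemann ω.1 g : ℝ) / 2) : ℝ) : ℂ) * ψ (act g⁻¹ ω))
 :
    Tendsto (fun n : ℕ => Mcoef π (oneL ν) (oneL ν) (ball N n) / (n : ℝ) ^ 3)
      atTop (nhds (((q : ℝ) - 1) ^ 2 / (3 * (q : ℝ) * ((q : ℝ) + 1)))) := by
  have hq3 : 3 ≤ q := by omega
  set r : ℝ := (q : ℝ) with hr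
  have hr0 : (0 : ℝ) < r := by rw [hr]; exact_mod_cast (by omega : 0 < q)
  have hr3 : (3 : ℝ) ≤ r := by rw [hr]; exact_mod_cast hq3
  have hb0 : r + 1 ≠ 0 := by linarith
  have hrne : r ≠ 0 := by linarith
  set Φ : ℕ → ℝ := fun k => (r ^ k)⁻¹ * ((r + 1) + k * (r - 1)) ^ 2 / (r + 1) ^ 2 with hΦ
  have hcoef : ∀ g : FreeGroup (Fin N),
      ‖(inner ℂ (π g (oneL ν)) (oneL ν) : ℂ)‖ ^ 2 = Φ (wordLength g) := by
    intro g
    rw [inner_pi_one ν hq3 hν π hπ g hN]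
    rw [Complex.norm_real, Real.norm_eq_abs, sq_abs]
    rw [hΦ]
    exact sq_innerVal hq3 _
  have hM : ∀ n : ℕ, Mcoef π (oneL ν) (oneL ν) (ball N n) =
      Φ 0 + ∑ i ∈ Finset.range n, ((2 * N * (2 * N - 1) ^ i : ℕ) : ℝ) * Φ (i + 1) := by
    intro n
    rw [Mcoef, ← coe_ballF n, finsum_mem_coe_finset]
    exact sum_ballF n _ Φ hcoef hN
  have hΦ0 : Φ 0 = 1 := by rw [hΦ]; field_simp; simp
  have hcast : ∀ i : ℕ, ((2 * N * (2 * N - 1) ^ i : ℕ) : ℝ) = (r + 1) * r ^ i := by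
    intro i
    have h1 : 2 * N - 1 = q := by omega
    have h2 : 2 * N = q + 1 := by omega
    rw [h1]
    rw [show 2 * N * q ^ i = (q + 1) * q ^ i by rw [h2]]
    push_cast
    rw [hr]
  have hterm : ∀ i : ℕ, ((2 * N * (2 * N - 1) ^ i : ℕ) : ℝ) * Φ (i + 1)
      = ((r + 1) + ((i : ℝ) + 1) * (r - 1)) ^ 2 / (r * (r + 1)) := by
    intro i
    rw [hcast i, hΦ]
    simp only []
    have hne1 : r ^ i ≠ 0 := pow_ne_zero _ hrne
    push_cast
    field_simp
    ring
  have hM' : ∀ n : ℕ, Mcoef π (oneL ν) (oneL ν) (ball N n) =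
      1 + ((r - 1) ^ 2 * ((n : ℝ) * ((n : ℝ) + 1) * (2 * (n : ℝ) + 1)) / 6 +
        (r - 1) * (r + 1) * ((n : ℝ) * ((n : ℝ) + 1)) + (r + 1) ^ 2 * (n : ℝ)) / (r * (r + 1)) := by
    intro n
    rw [hM n, hΦ0]
    congr 1
    rw [Finset.sum_congr rfl (fun i _ => hterm i)]
    rw [← Finset.sum_div, sum_sq_closed (r - 1) (r + 1) n]
  set c0 : ℝ := (r - 1) ^ 2 / (3 * r * (r + 1)) with hc0
  set c1 : ℝ := ((r - 1) ^ 2 / 2 + (r - 1) * (r + 1)) / (r * (r + 1)) with hc1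
  set c2 : ℝ := ((r - 1) ^ 2 / 6 + (r - 1) * (r + 1) + (r + 1) ^ 2) / (r * (r + 1)) with hc2
  have heq : (fun n : ℕ => Mcoef π (oneL ν) (oneL ν) (ball N n) / (n : ℝ) ^ 3) =ᶠ[atTop]
      (fun n : ℕ => c0 + c1 * ((n : ℝ))⁻¹ + c2 * ((n : ℝ)⁻¹) ^ 2 + 1 * ((n : ℝ)⁻¹) ^ 3) := by
    filter_upwards [eventually_ge_atTop 1] with n hn
    have hn0 : (n : ℝ) ≠ 0 := Nat.cast_ne_zero.mpr (by omega)
    rw [hM' n, hc0, hc1, hc2]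
    have hrr : r * (r + 1) ≠ 0 := mul_ne_zero hrne hb0
    field_simp
    ring
  have h0 : Tendsto (fun n : ℕ => ((n : ℝ))⁻¹) atTop (nhds 0) :=
    tendsto_inv_atTop_nhds_zero_nat
  have hlim : Tendsto (fun n : ℕ => c0 + c1 * ((n : ℝ))⁻¹ + c2 * ((n : ℝ)⁻¹) ^ 2 +
      1 * ((n : ℝ)⁻¹) ^ 3) atTop (nhds (c0 + c1 * 0 + c2 * 0 ^ 2 + 1 * 0 ^ 3)) := by
    exact ((tendsto_const_nhds.add (h0.const_mul c1)).add
      ((h0.pow 2).const_mul c2)).add ((h0.pow 3).const_mul 1)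
  have hval : c0 + c1 * 0 + c2 * 0 ^ 2 + 1 * 0 ^ 3 = c0 := by ring
  rw [hval] at hlim
  exact Filter.Tendsto.congr' heq.symm hlim

end FreeGroupBoundary
end
end

section
/- Let Γ be a group, σ a unitary representation of Γ on a complex Hilbert space H, (F_n) a sequence of finite subsets of Γ, and (a_n) a sequence of positive reals. Suppose that for all v₁, v₂, v₃, v₄ ∈ H, lim_{n→∞} (1/a_n)·Σ_{g ∈ F_n} ⟨σ(g)v₁, v₂⟩·conj(⟨σ(g)v₃, v₄⟩) = ⟨v₁, v₃⟩·conj(⟨v₂, v₄⟩). Then σ is irreducible: every closed σ-invariant subspace of H is {0} or H. -/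
open MeasureTheory Filter
open scoped ENNReal

noncomputable section

namespace FreeGroupBoundary

theorem irreducible_of_asymptotic_schur {Γ : Type*} [Group Γ]
    {H : Type*} [NormedAddCommGroup H] [InnerProductSpace ℂ H] [CompleteSpace H]
    (σ : Γ →* (H →L[ℂ] H)) (hσ_unitary : ∀ (g : Γ) (v : H), ‖σ g v‖ = ‖v‖)
    (F : ℕ → Finset Γ) (a : ℕ → ℝ) (ha : ∀ n, 0 < a n)
    (hlim : ∀ v₁ v₂ v₃ v₄ : H,
      Tendsto
        (fun n : ℕ => (1 / (a n : ℂ)) *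
          ∑ g ∈ F n, (inner ℂ (σ g v₁) v₂ : ℂ) * (starRingEnd ℂ) (inner ℂ (σ g v₃) v₄))
        atTop (nhds ((inner ℂ v₁ v₃ : ℂ) * (starRingEnd ℂ) (inner ℂ v₂ v₄)))) :
    ∀ V : Submodule ℂ H, IsClosed (V : Set H) → (∀ (g : Γ), ∀ v ∈ V, σ g v ∈ V) →
      V = ⊥ ∨ V = ⊤ := by
  intro V hVc hinv
  by_contra hcon
  push_neg at hcon
  obtain ⟨hbot, htop⟩ := hcon
  obtain ⟨v, hvV, hv0⟩ := Submodule.exists_mem_ne_zero_of_ne_bot hbot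
  haveI : CompleteSpace V := hVc.completeSpace_coe
  have hVorth : Vᗮ ≠ ⊥ := by
    intro h; exact htop (Submodule.orthogonal_eq_bot_iff.mp h)
  obtain ⟨w, hwV, hw0⟩ := Submodule.exists_mem_ne_zero_of_ne_bot hVorth
  have key := hlim v w v w
  have hzero : (fun n : ℕ => (1 / (a n : ℂ)) *
      ∑ g ∈ F n, (inner ℂ (σ g v) w : ℂ) * (starRingEnd ℂ) (inner ℂ (σ g v) w))
      = fun _ => (0 : ℂ) := by
    funext n
    have h0 : ∀ g ∈ F n, (inner ℂ (σ g v) w : ℂ) * (starRingEnd ℂ) (inner ℂ (σ g v) w) = 0 := by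
      intro g _
      have : (inner ℂ (σ g v) w : ℂ) = 0 :=
        (Submodule.mem_orthogonal V w).mp hwV _ (hinv g v hvV)
      simp [this]
    rw [Finset.sum_congr rfl h0]
    simp
  rw [hzero] at key
  have := tendsto_nhds_unique key tendsto_const_nhds
  have hvv : (inner ℂ v v : ℂ) ≠ 0 := inner_self_ne_zero.mpr hv0
  have hww : (starRingEnd ℂ) (inner ℂ w w : ℂ) ≠ 0 := by
    simp only [map_ne_zero]
    exact inner_self_ne_zero.mpr hw0
  exact (mul_ne_zero hvv hww) this

end FreeGroupBoundary
end
end
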